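/- Let S be the semigroup defined by the presentation ⟨a, b, c | cac = cbc⟩, i.e., the quotient of the free semigroup on the three-element set {a, b, c} by the semigroup congruence generated by the pair (cac, cbc). Then the assignment a ↦ b, b ↦ a, c ↦ c extends to a well-defined semigroup endomorphism φ of S; φ is an automorphism with φ ∘ φ = id; the elements cac, (ca)²c, (ca)³c, … are pairwise distinct fixed points of φ; and the subsemigroup Fix(φ) = { x ∈ S : φ(x) = x } is not finitely generated. In particular, S ∉ UA. -/

import Mathlib

/-- The single defining relation `cac = cbc` of the presentation
`⟨a, b, c | cac = cbc⟩`, on the free semigroup over `Fin 3`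
(with `a = 0`, `b = 1`, `c = 2`). -/
def cacRel (u v : FreeSemigroup (Fin 3)) : Prop :=
  u = FreeSemigroup.of 2 * FreeSemigroup.of 0 * FreeSemigroup.of 2 ∧
  v = FreeSemigroup.of 2 * FreeSemigroup.of 1 * FreeSemigroup.of 2

/-- The semigroup `S` defined by the presentation `⟨a, b, c | cac = cbc⟩`. -/
abbrev cacSemigroup := (conGen cacRel).Quotient

/-- The word `(ca)^{n+1} c` in the free semigroup (so `cacWord 0 = cac`). -/
def cacWord : ℕ → FreeSemigroup (Fin 3)
  | 0 => FreeSemigroup.of 2 * FreeSemigroup.of 0 * FreeSemigroup.of 2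
  | n + 1 => FreeSemigroup.of 2 * FreeSemigroup.of 0 * cacWord n

namespace CacAux

open FreeSemigroup

/-- the swap of letters a,b -/
def σ : Fin 3 → Fin 3 := ![1, 0, 2]

def swapHom : FreeSemigroup (Fin 3) →ₙ* FreeSemigroup (Fin 3) := FreeSemigroup.map σ

/-- generic invariant lemma -/
theorem invariant {β : Sort*} (f : FreeSemigroup (Fin 3) → β)
    (hrel : ∀ u v, cacRel u v → f u = f v)
    (hmul : ∀ u v u' v', f u = f u' → f v = f v' → f (u*v) = f (u'*v')) :
    ∀ u v, conGen cacRel u v → f u = f v := by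
  intro u v h
  induction h with
  | of u v h => exact hrel u v h
  | refl => rfl
  | symm _ ih => exact ih.symm
  | trans _ _ ih1 ih2 => exact ih1.trans ih2
  | mul _ _ ih1 ih2 => exact hmul _ _ _ _ ih1 ih2

/-- word as nonempty list -/
def wl (u : FreeSemigroup (Fin 3)) : List (Fin 3) := u.head :: u.tail

@[simp] theorem wl_mul (u v : FreeSemigroup (Fin 3)) : wl (u * v) = wl u ++ wl v := by
  simp [wl]

@[simp] theorem wl_of (x : Fin 3) : wl (of x) = [x] := rfl

@[simp] theorem wl_ne_nil (u : FreeSemigroup (Fin 3)) : wl u ≠ [] := by simp [wl]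

theorem wl_swap (u : FreeSemigroup (Fin 3)) : wl (swapHom u) = (wl u).map σ := by
  induction u with
  | ih1 x => rfl
  | ih2 x y _ ih => simp [map_mul, swapHom] at ih ⊢; exact ih

/-- head invariant -/
theorem head_inv : ∀ u v, conGen cacRel u v → u.head = v.head := by
  refine invariant _ ?_ ?_
  · rintro u v ⟨rfl, rfl⟩; rfl
  · intro u v u' v' h1 _; simpa using h1

/-- last letter invariant -/
theorem last_inv : ∀ u v, conGen cacRel u v → (wl u).getLast? = (wl v).getLast? := by
  refine invariant _ ?_ ?_
  · rintro u v ⟨rfl, rfl⟩; rfl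
  · intro u v u' v' _ h2
    rw [wl_mul, wl_mul, List.getLast?_append, List.getLast?_append]
    obtain ⟨x, hx⟩ := Option.isSome_iff_exists.1 (List.getLast?_isSome.2 (wl_ne_nil v))
    obtain ⟨y, hy⟩ := Option.isSome_iff_exists.1 (List.getLast?_isSome.2 (wl_ne_nil v'))
    rw [hx, hy] at h2 ⊢; simp at h2; simp [h2]


def isC (i : Fin 3) : Bool := decide (i = 2)

/-- the c-position mask is invariant -/
theorem mask_inv : ∀ u v, conGen cacRel u v → (wl u).map isC = (wl v).map isC := by
  refine invariant _ ?_ ?_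
  · rintro u v ⟨rfl, rfl⟩; rfl
  · intro u v u' v' h1 h2; simp only [wl_mul, List.map_append, h1, h2]

/-- length invariant -/
theorem length_inv : ∀ u v, conGen cacRel u v → (wl u).length = (wl v).length := by
  refine invariant _ ?_ ?_
  · rintro u v ⟨rfl, rfl⟩; rfl
  · intro u v u' v' h1 h2; simp only [wl_mul, List.length_append, h1, h2]

theorem σσ (i : Fin 3) : σ (σ i) = i := by fin_cases i <;> rfl

theorem rel_swap : ∀ u v, conGen cacRel u v → conGen cacRel (swapHom u) (swapHom v) := by
  intro u v h
  induction h with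
  | of u v h =>
    obtain ⟨rfl, rfl⟩ := h
    have e1 : swapHom (of 2 * of 0 * of 2) = of 2 * of 1 * of 2 := by
      simp [swapHom, map_mul]; rfl
    have e2 : swapHom (of 2 * of 1 * of 2) = of 2 * of 0 * of 2 := by
      simp [swapHom, map_mul]; rfl
    rw [e1, e2]
    exact ConGen.Rel.symm (ConGen.Rel.of _ _ ⟨rfl, rfl⟩)
  | refl x => exact ConGen.Rel.refl _
  | symm _ ih => exact ConGen.Rel.symm ih
  | trans _ _ ih1 ih2 => exact ConGen.Rel.trans ih1 ih2
  | mul _ _ ih1 ih2 => simp only [map_mul]; exact ConGen.Rel.mul ih1 ih2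

theorem swap_swap (u : FreeSemigroup (Fin 3)) : swapHom (swapHom u) = u := by
  induction u with
  | ih1 x => show of (σ (σ x)) = of x; rw [σσ]
  | ih2 x y hx ih =>
    simp only [swapHom, map_mul] at hx ih ⊢
    rw [ih, hx]

/-- the endomorphism φ on the quotient -/
def φ : cacSemigroup →ₙ* cacSemigroup where
  toFun x := Con.liftOn x (fun u => (conGen cacRel).toQuotient (swapHom u))
    (fun u v h => (Con.eq _).2 (rel_swap u v h))
  map_mul' x y := by
    refine Con.induction_on₂ x y fun u v => ?_
    show (conGen cacRel).toQuotient (swapHom (u * v)) = _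
    rw [map_mul]
    rfl

theorem φ_mk (u : FreeSemigroup (Fin 3)) :
    φ ((conGen cacRel).toQuotient u) = (conGen cacRel).toQuotient (swapHom u) := rfl

def cbcWord : ℕ → FreeSemigroup (Fin 3)
  | 0 => of 2 * of 1 * of 2
  | n + 1 => of 2 * of 1 * cbcWord n

theorem swap_cacWord : ∀ n, swapHom (cacWord n) = cbcWord n := by
  intro n
  induction n with
  | zero => rfl
  | succ n ih =>
    show swapHom (of 2 * of 0 * cacWord n) = of 2 * of 1 * cbcWord n
    rw [map_mul, map_mul, ih]; rfl

theorem cbc_split : ∀ n, ∃ s, cbcWord n = of 2 * s := by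
  intro n
  cases n with
  | zero => exact ⟨of 1 * of 2, by simp [cbcWord, mul_assoc]⟩
  | succ n => exact ⟨of 1 * cbcWord n, by simp [cbcWord, mul_assoc]⟩

theorem cac_rel_cbc : ∀ n, conGen cacRel (cacWord n) (cbcWord n) := by
  intro n
  induction n with
  | zero => exact ConGen.Rel.of _ _ ⟨rfl, rfl⟩
  | succ n ih =>
    have h1 : conGen cacRel (cacWord (n+1)) (of 2 * of 0 * cbcWord n) :=
      ConGen.Rel.mul (ConGen.Rel.refl (of 2 * of 0)) ih
    refine ConGen.Rel.trans h1 ?_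
    obtain ⟨s, hs⟩ := cbc_split n
    have e1 : of 2 * of 0 * cbcWord n = (of 2 * of 0 * of 2) * s := by
      rw [hs, mul_assoc, mul_assoc, mul_assoc]
    have e2 : (cbcWord (n+1) : FreeSemigroup (Fin 3)) = (of 2 * of 1 * of 2) * s := by
      show of 2 * of 1 * cbcWord n = _
      rw [hs, mul_assoc, mul_assoc, mul_assoc]
    rw [e1, e2]
    exact ConGen.Rel.mul (ConGen.Rel.of _ _ ⟨rfl, rfl⟩) (ConGen.Rel.refl s)

theorem cacWord_fixed (n : ℕ) : conGen cacRel (swapHom (cacWord n)) (cacWord n) := by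
  rw [swap_cacWord]; exact ConGen.Rel.symm (cac_rel_cbc n)

theorem wl_cacWord_len : ∀ n, (wl (cacWord n)).length = 2 * n + 3 := by
  intro n
  induction n with
  | zero => rfl
  | succ n ih =>
    show (wl (of 2 * of 0 * cacWord n)).length = _
    simp only [wl_mul, List.length_append, ih, wl_of, List.length_singleton]
    omega

theorem mask_cac : ∀ n, ∃ t, (wl (cacWord n)).map isC = true :: t ∧
    List.Chain' (· ≠ ·) (true :: t) := by
  intro n
  induction n with
  | zero => exact ⟨[false, true], rfl, by simp [List.Chain', List.isChain_cons_cons]⟩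
  | succ n ih =>
    obtain ⟨t, ht, hc⟩ := ih
    refine ⟨false :: true :: t, ?_, ?_⟩
    · show ((wl (of 2 * of 0 * cacWord n)).map isC) = _
      simp only [wl_mul, wl_of, List.map_append, ht]
      rfl
    · rw [List.Chain', List.isChain_cons_cons, List.isChain_cons_cons]
      exact ⟨by simp, by simp, hc⟩

theorem head_swap (u : FreeSemigroup (Fin 3)) : (swapHom u).head = σ u.head := by
  have h := wl_swap u
  simp only [wl, List.map_cons, List.cons.injEq] at h
  exact h.1

theorem σ_fix {x : Fin 3} (h : σ x = x) : x = 2 := by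
  fin_cases x <;> simp_all [σ]

theorem fixed_head {u : FreeSemigroup (Fin 3)} (h : conGen cacRel (swapHom u) u) :
    u.head = 2 := by
  have := head_inv _ _ h
  rw [head_swap] at this
  exact σ_fix this

theorem fixed_last {u : FreeSemigroup (Fin 3)} (h : conGen cacRel (swapHom u) u) :
    (wl u).getLast? = some 2 := by
  have h1 := last_inv _ _ h
  rw [wl_swap, List.getLast?_map] at h1
  obtain ⟨x, hx⟩ := Option.isSome_iff_exists.1 (List.getLast?_isSome.2 (wl_ne_nil u))
  rw [hx] at h1 ⊢
  simp only [Option.map_some] at h1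
  have hx2 : σ x = x := by injection h1
  rw [σ_fix hx2]

theorem indec (n : ℕ) (u v : FreeSemigroup (Fin 3))
    (hu : conGen cacRel (swapHom u) u) (hv : conGen cacRel (swapHom v) v)
    (h : conGen cacRel (u * v) (cacWord n)) : False := by
  have hmask := mask_inv _ _ h
  obtain ⟨t, ht, hc⟩ := mask_cac n
  rw [wl_mul, List.map_append, ht] at hmask
  have hchain : List.Chain' (· ≠ ·) ((wl u).map isC ++ (wl v).map isC) := by
    rw [hmask]; exact hc
  rw [List.Chain', List.isChain_append] at hchain
  have hlast : ((wl u).map isC).getLast? = some true := by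
    rw [List.getLast?_map, fixed_last hu]; rfl
  have hhead : ((wl v).map isC).head? = some true := by
    have : wl v = 2 :: v.tail := by rw [← fixed_head hv]; rfl
    rw [this]; rfl
  exact hchain.2.2 true hlast true hhead rfl

theorem mk_eq (u : FreeSemigroup (Fin 3)) :
    (Quotient.mk (conGen cacRel).toSetoid u) = (conGen cacRel).toQuotient u := rfl

theorem cacWord_inj : Function.Injective
    (fun n : ℕ => (conGen cacRel).toQuotient (cacWord n)) := by
  intro n m h
  have := length_inv _ _ ((Con.eq _).1 h)
  rw [wl_cacWord_len, wl_cacWord_len] at this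
  omega

theorem fix_not_fg : ¬ ∃ B : Finset cacSemigroup,
    (Subsemigroup.closure (B : Set cacSemigroup) : Set cacSemigroup) =
      {x : cacSemigroup | φ x = x} := by
  rintro ⟨B, hB⟩
  -- each cacWord class is in the fixed set
  have hfix : ∀ n, φ ((conGen cacRel).toQuotient (cacWord n)) =
      (conGen cacRel).toQuotient (cacWord n) := by
    intro n
    rw [φ_mk]
    exact (Con.eq _).2 (cacWord_fixed n)
  -- each cacWord class is in B
  have hmem : ∀ n, (conGen cacRel).toQuotient (cacWord n) ∈ B := by
    intro n
    have hin : (conGen cacRel).toQuotient (cacWord n) ∈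
        Subsemigroup.closure (B : Set cacSemigroup) := by
      have : (conGen cacRel).toQuotient (cacWord n) ∈
          {x : cacSemigroup | φ x = x} := hfix n
      rw [← hB] at this
      exact this
    -- decomposition analysis
    have key : ∀ x : cacSemigroup, x ∈ Subsemigroup.closure (B : Set cacSemigroup) →
        (x ∈ B ∨ ∃ y z : cacSemigroup, φ y = y ∧ φ z = z ∧ x = y * z) := by
      intro x hx
      have : (x ∈ Subsemigroup.closure (B : Set cacSemigroup)) ∧
          (x ∈ B ∨ ∃ y z : cacSemigroup, φ y = y ∧ φ z = z ∧ x = y * z) := by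
        induction hx using Subsemigroup.closure_induction with
        | mem w hw => exact ⟨Subsemigroup.subset_closure hw, Or.inl hw⟩
        | mul w z hw hz ihw ihz =>
          refine ⟨Subsemigroup.mul_mem _ ihw.1 ihz.1, Or.inr ⟨w, z, ?_, ?_, rfl⟩⟩
          · have : w ∈ {x : cacSemigroup | φ x = x} := by rw [← hB]; exact ihw.1
            exact this
          · have : z ∈ {x : cacSemigroup | φ x = x} := by rw [← hB]; exact ihz.1
            exact this
      exact this.2
    rcases key _ hin with h | ⟨y, z, hy, hz, hyz⟩
    · exact h
    · exfalso
      obtain ⟨a, ha⟩ := Quotient.exists_rep y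
      obtain ⟨b, hb⟩ := Quotient.exists_rep z
      rw [← ha] at hy
      rw [← hb] at hz
      rw [← ha, ← hb] at hyz
      rw [mk_eq] at hy hz
      rw [mk_eq a, mk_eq b] at hyz
      rw [φ_mk] at hy hz
      have ha' : conGen cacRel (swapHom a) a := (Con.eq _).1 hy
      have hb' : conGen cacRel (swapHom b) b := (Con.eq _).1 hz
      have hab : conGen cacRel (a * b) (cacWord n) := by
        have : (conGen cacRel).toQuotient (a * b) =
            (conGen cacRel).toQuotient (cacWord n) := hyz.symm
        exact (Con.eq _).1 this
      exact indec n a b ha' hb' hab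
  -- infinitely many distinct elements in a finite set
  have hinj : Function.Injective
      (fun n : ℕ => (⟨(conGen cacRel).toQuotient (cacWord n), hmem n⟩ : {x // x ∈ B})) := by
    intro n m h
    exact cacWord_inj (congrArg Subtype.val h)
  have : Finite ℕ := Finite.of_injective _ hinj
  exact not_finite ℕ

end CacAux

theorem φφ (x : cacSemigroup) : CacAux.φ (CacAux.φ x) = x := by
  refine Con.induction_on x fun u => ?_
  rw [CacAux.φ_mk, CacAux.φ_mk, CacAux.swap_swap]

/-- in the semigroup `S = ⟨a, b, c | cac = cbc⟩` there is a
(well-defined) endomorphism `φ` with `a ↦ b`, `b ↦ a`, `c ↦ c`; it satisfies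
`φ ∘ φ = id` (hence is an automorphism); the elements `cac, (ca)²c, (ca)³c, …`
are pairwise distinct fixed points of `φ`; and `Fix(φ)` is not finitely
generated as a subsemigroup. In particular `S ∉ UA`: no `N` bounds the rank of
`Fix(ψ)` over all automorphisms `ψ` of `S`. -/
theorem stmt_17 :
    (∃ φ : cacSemigroup →ₙ* cacSemigroup,
      φ ((conGen cacRel).toQuotient (FreeSemigroup.of 0)) =
        (conGen cacRel).toQuotient (FreeSemigroup.of 1) ∧
      φ ((conGen cacRel).toQuotient (FreeSemigroup.of 1)) =
        (conGen cacRel).toQuotient (FreeSemigroup.of 0) ∧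
      φ ((conGen cacRel).toQuotient (FreeSemigroup.of 2)) =
        (conGen cacRel).toQuotient (FreeSemigroup.of 2) ∧
      (∀ x : cacSemigroup, φ (φ x) = x) ∧
      (∀ n : ℕ, φ ((conGen cacRel).toQuotient (cacWord n)) =
        (conGen cacRel).toQuotient (cacWord n)) ∧
      (Function.Injective fun n : ℕ => (conGen cacRel).toQuotient (cacWord n)) ∧
      ¬ ∃ B : Finset cacSemigroup,
        (Subsemigroup.closure (B : Set cacSemigroup) : Set cacSemigroup) =
          {x : cacSemigroup | φ x = x}) ∧
    ¬ ∃ N : ℕ, ∀ ψ : cacSemigroup →ₙ* cacSemigroup, Function.Bijective ψ →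
      ∃ B : Finset cacSemigroup, B.card ≤ N ∧
        (Subsemigroup.closure (B : Set cacSemigroup) : Set cacSemigroup) =
          {x : cacSemigroup | ψ x = x} := by
  constructor
  · refine ⟨CacAux.φ, rfl, rfl, rfl, φφ, ?_, CacAux.cacWord_inj, CacAux.fix_not_fg⟩
    intro n
    rw [CacAux.φ_mk]
    exact (Con.eq _).2 (CacAux.cacWord_fixed n)
  · rintro ⟨N, hN⟩
    have hbij : Function.Bijective CacAux.φ :=
      Function.Involutive.bijective φφ
    obtain ⟨B, _, hB⟩ := hN CacAux.φ hbij
    exact CacAux.fix_not_fg ⟨B, hB⟩
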